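/- Let n ≥ 14 be an even integer. For every 0 ≤ j ≤ n−1, the line L_j contains at least ⌊n/3⌋ + 1 points of ℬ_n; that is, the finite set ℬ_n ∩ L_j has cardinality at least ⌊n/3⌋ + 1. -/

import Mathlib

open Complex

/-- `P n j = exp(2πij/n)`. -/
noncomputable def Ppt (n j : ℕ) : ℂ := Complex.exp (2 * Real.pi * Complex.I * j / n)

/-- `Q n j = -exp(-4πij/n)`. -/
noncomputable def Qpt (n j : ℕ) : ℂ := -Complex.exp (-(4 * Real.pi * Complex.I * j) / n)

open scoped Classical in
/-- The `j`-th line of the Böröczky configuration: the line through `P n j` and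
`Q n j` if they are distinct, and the tangent line to the unit circle at `P n j`
otherwise (identifying ℝ² with ℂ). -/
noncomputable def Bline (n j : ℕ) : Set ℂ :=
  if Ppt n j = Qpt n j then
    {z : ℂ | (z * (starRingEnd ℂ) (Ppt n j)).re = 1}
  else
    {z : ℂ | ((z - Ppt n j) * (starRingEnd ℂ) (Qpt n j - Ppt n j)).im = 0}

/-- The set of triple points of the Böröczky configuration: points lying on at
least three of the lines `L_0, …, L_{n-1}`. -/
def TriplePts (n : ℕ) : Set ℂ :=
  {z : ℂ | 3 ≤ ({j : ℕ | j < n ∧ z ∈ Bline n j} : Set ℕ).ncard}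

noncomputable def zet (n : ℕ) : ℂ := Complex.exp (2 * Real.pi * Complex.I / n)

lemma zet_prim {n : ℕ} (hn : n ≠ 0) : IsPrimitiveRoot (zet n) n :=
  Complex.isPrimitiveRoot_exp n hn

lemma Ppt_eq (n j : ℕ) : Ppt n j = zet n ^ j := by
  rw [Ppt, zet, ← Complex.exp_nat_mul]; congr 1; ring

lemma Qpt_eq (n j : ℕ) : Qpt n j = -(zet n ^ j * zet n ^ j)⁻¹ := by
  rw [Qpt, zet, ← Complex.exp_nat_mul, ← Complex.exp_add, ← Complex.exp_neg]
  congr 1; ring_nf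

lemma zet_ne_zero (n : ℕ) : zet n ≠ 0 := Complex.exp_ne_zero _

lemma zet_norm {n : ℕ} (hn : n ≠ 0) : ‖zet n‖ = 1 := by
  have h := (zet_prim hn).pow_eq_one
  have h2 := congrArg (‖·‖) h
  simp only [norm_pow, norm_one] at h2
  set x := ‖zet n‖ with hx
  have hx0 : 0 ≤ x := norm_nonneg _
  rcases lt_trichotomy x 1 with h1 | h1 | h1
  · have := pow_lt_one₀ hx0 h1 hn; linarith
  · exact h1
  · have := one_lt_pow₀ h1 hn; linarith

lemma conj_zet_pow {n : ℕ} (hn : n ≠ 0) (k : ℕ) :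
    (starRingEnd ℂ) (zet n ^ k) = (zet n ^ k)⁻¹ := by
  rw [← Complex.inv_eq_conj]
  simp [norm_pow, zet_norm hn]

lemma Ppt_ne_zero (n j : ℕ) : Ppt n j ≠ 0 := Complex.exp_ne_zero _
lemma Qpt_ne_zero (n j : ℕ) : Qpt n j ≠ 0 := by
  simp [Qpt, Complex.exp_ne_zero]

lemma conj_Ppt {n : ℕ} (hn : n ≠ 0) (j : ℕ) :
    (starRingEnd ℂ) (Ppt n j) = (Ppt n j)⁻¹ := by
  rw [Ppt_eq]; exact conj_zet_pow hn j

lemma conj_Qpt {n : ℕ} (hn : n ≠ 0) (j : ℕ) :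
    (starRingEnd ℂ) (Qpt n j) = (Qpt n j)⁻¹ := by
  rw [Qpt_eq, map_neg, map_inv₀, map_mul, conj_zet_pow hn]
  simp [inv_neg, mul_inv, inv_inv]

lemma tangent_aux (P z : ℂ) (hP0 : P ≠ 0) (hcP : (starRingEnd ℂ) P = P⁻¹) :
    (z * (starRingEnd ℂ) P).re = 1 ↔ z + P * P * (starRingEnd ℂ) z = P + P := by
  set c := (starRingEnd ℂ) z with hc
  have key : z * P⁻¹ + c * P = 2 ↔ z + P * P * c = P + P := by
    constructor
    · intro h1
      have h2 : z + c * P * P = 2 * P := by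
        field_simp at h1; linear_combination h1
      linear_combination h2
    · intro h1
      field_simp
      linear_combination h1
  rw [hcP]
  have hconj : (starRingEnd ℂ) (z * P⁻¹) = c * P := by
    rw [map_mul, map_inv₀, hcP, inv_inv, ← hc, mul_comm]
  have h3 := Complex.add_conj (z * P⁻¹)
  rw [hconj] at h3
  constructor
  · intro hre
    rw [hre] at h3
    norm_num at h3
    exact key.mp h3
  · intro heq
    have h2 := key.mpr heq
    rw [h2] at h3
    have h5 : (2 : ℝ) = 2 * (z * P⁻¹).re := by exact_mod_cast h3
    linarith

lemma chord_aux (P Q z : ℂ) (hP0 : P ≠ 0) (hQ0 : Q ≠ 0)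
    (hcP : (starRingEnd ℂ) P = P⁻¹) (hcQ : (starRingEnd ℂ) Q = Q⁻¹) (hPQ : P ≠ Q) :
    ((z - P) * (starRingEnd ℂ) (Q - P)).im = 0 ↔
      z + P * Q * (starRingEnd ℂ) z = P + Q := by
  set c := (starRingEnd ℂ) z with hc
  rw [← Complex.conj_eq_iff_im, map_mul, map_sub, Complex.conj_conj, map_sub, hcP, hcQ, ← hc]
  constructor
  · intro h1
    field_simp at h1
    have h2 : (Q - P) * P * (z + P * Q * c - (P + Q)) = 0 := by linear_combination P * h1
    rcases mul_eq_zero.mp h2 with h3 | h3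
    · rcases mul_eq_zero.mp h3 with h4 | h4
      · exact absurd (sub_eq_zero.mp h4).symm hPQ
      · exact absurd h4 hP0
    · exact sub_eq_zero.mp h3
  · intro h1
    field_simp
    linear_combination (Q - P) * h1

lemma mem_Bline_iff {n : ℕ} (hn : n ≠ 0) (j : ℕ) (z : ℂ) :
    z ∈ Bline n j ↔
      z + (Ppt n j * Qpt n j) * (starRingEnd ℂ) z = Ppt n j + Qpt n j := by
  rw [Bline]
  split_ifs with h
  · simp only [Set.mem_setOf_eq]
    rw [← h]
    exact tangent_aux _ z (Ppt_ne_zero n j) (conj_Ppt hn j)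
  · simp only [Set.mem_setOf_eq]
    exact chord_aux _ _ z (Ppt_ne_zero n j) (Qpt_ne_zero n j) (conj_Ppt hn j) (conj_Qpt hn j)
      (fun he => h he)

/-- membership of the symmetric triple point -/
lemma triple_mem {n : ℕ} (hn : n ≠ 0) {a b c : ℕ} (h : n ∣ a + b + c) :
    zet n ^ a + zet n ^ b + zet n ^ c ∈ Bline n a := by
  have hz0 : zet n ≠ 0 := zet_ne_zero n
  have hA : zet n ^ a ≠ 0 := pow_ne_zero _ hz0
  have hB : zet n ^ b ≠ 0 := pow_ne_zero _ hz0
  have hC : zet n ^ c ≠ 0 := pow_ne_zero _ hz0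
  have habc : zet n ^ a * zet n ^ b * zet n ^ c = 1 := by
    rw [← pow_add, ← pow_add]
    obtain ⟨s, hs⟩ := h
    rw [hs, pow_mul, (zet_prim hn).pow_eq_one, one_pow]
  rw [mem_Bline_iff hn]
  rw [Ppt_eq, Qpt_eq]
  rw [map_add, map_add, conj_zet_pow hn, conj_zet_pow hn, conj_zet_pow hn]
  field_simp
  ring_nf
  linear_combination (zet n ^ a * (zet n ^ b + zet n ^ c)) * habc
/-- distinct lines meet in at most one point -/
lemma inter_subsingleton {n : ℕ} (hn : n ≠ 0) {i j : ℕ} (hi : i < n) (hj : j < n)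
    (hij : i ≠ j) : Set.Subsingleton (Bline n i ∩ Bline n j) := by
  have hmu : Ppt n i * Qpt n i ≠ Ppt n j * Qpt n j := by
    rw [Ppt_eq, Qpt_eq, Ppt_eq, Qpt_eq]
    intro he
    have hz0 : zet n ≠ 0 := zet_ne_zero n
    have hAi : zet n ^ i ≠ 0 := pow_ne_zero _ hz0
    have hAj : zet n ^ j ≠ 0 := pow_ne_zero _ hz0
    have hsimp : ∀ a : ℂ, a ≠ 0 → a * -(a * a)⁻¹ = -a⁻¹ := by
      intro a ha; field_simp
    rw [hsimp _ hAi, hsimp _ hAj, neg_inj, inv_inj] at he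
    exact hij ((zet_prim hn).pow_inj hi hj he)
  intro z hz w hw
  rw [Set.mem_inter_iff, mem_Bline_iff hn, mem_Bline_iff hn] at hz hw
  have h1 : (z - w) + Ppt n i * Qpt n i * (starRingEnd ℂ) (z - w) = 0 := by
    rw [map_sub]; linear_combination hz.1 - hw.1
  have h2 : (z - w) + Ppt n j * Qpt n j * (starRingEnd ℂ) (z - w) = 0 := by
    rw [map_sub]; linear_combination hz.2 - hw.2
  have h3 : (Ppt n i * Qpt n i - Ppt n j * Qpt n j) * (starRingEnd ℂ) (z - w) = 0 := by
    linear_combination h1 - h2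
  rcases mul_eq_zero.mp h3 with h4 | h4
  · exact absurd (sub_eq_zero.mp h4) hmu
  · have h5 : z - w = 0 := by
      have := congrArg (starRingEnd ℂ) h4
      simpa using this
    exact sub_eq_zero.mp h5

/-- sums of two unit vectors -/
lemma unit_sum_cases {a b a' b' : ℂ} (ha0 : a ≠ 0) (hb0 : b ≠ 0) (ha'0 : a' ≠ 0) (hb'0 : b' ≠ 0)
    (ha : (starRingEnd ℂ) a = a⁻¹) (hb : (starRingEnd ℂ) b = b⁻¹)
    (ha' : (starRingEnd ℂ) a' = a'⁻¹) (hb' : (starRingEnd ℂ) b' = b'⁻¹)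
    (h : a + b = a' + b') :
    (a = a' ∧ b = b') ∨ (a = b' ∧ b = a') ∨ (b = -a ∧ b' = -a') := by
  by_cases hs : a + b = 0
  · right; right
    constructor
    · linear_combination hs
    · linear_combination hs - h
  · have hcs : (starRingEnd ℂ) (a + b) * (a * b) = a + b := by
      rw [map_add, ha, hb]; field_simp; ring
    have hcs' : (starRingEnd ℂ) (a + b) * (a' * b') = a + b := by
      rw [h, map_add, ha', hb']; field_simp; ring
    have hcne : (starRingEnd ℂ) (a + b) ≠ 0 := by
      intro h0
      apply hs
      have := congrArg (starRingEnd ℂ) h0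
      simpa using this
    have hab : a * b = a' * b' := by
      have := hcs.trans hcs'.symm
      exact mul_left_cancel₀ hcne this
    have key : (a' - a) * (a' - b) = 0 := by linear_combination (-a') * h + hab
    rcases mul_eq_zero.mp key with h4 | h4
    · left
      have h5 : a' = a := sub_eq_zero.mp h4
      exact ⟨h5.symm, by linear_combination h + h5⟩
    · right; left
      have h5 : a' = b := sub_eq_zero.mp h4
      exact ⟨by linear_combination h + h5, h5.symm⟩
lemma small_of_dvd3 {n a s : ℕ} (hn : 0 < n) (ha : a < 3 * n) (hs : a = n * s) :
    a = 0 ∨ a = n ∨ a = 2 * n := by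
  have hub : n * s < n * 3 := by rw [← hs]; omega
  have hs3 : s < 3 := Nat.lt_of_mul_lt_mul_left hub
  interval_cases s <;> omega

lemma pow_triple_one {n : ℕ} (hn : n ≠ 0) {a b c : ℕ} (h : n ∣ a + b + c) :
    zet n ^ a * zet n ^ b * zet n ^ c = 1 := by
  rw [← pow_add, ← pow_add]
  obtain ⟨s, hs⟩ := h
  rw [hs, pow_mul, (zet_prim hn).pow_eq_one, one_pow]

def lfn (n j k : ℕ) : ℕ := (2 * n - (j + k)) % n

lemma lfn_lt {n : ℕ} (hn : 0 < n) (j k : ℕ) : lfn n j k < n := Nat.mod_lt _ hn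

lemma lfn_dvd {n j k : ℕ} (hj : j < n) (hk : k < n) : n ∣ j + k + lfn n j k := by
  have h1 : (j + k + lfn n j k) % n = (j + k + (2 * n - (j + k))) % n := by
    apply Nat.ModEq.add_left
    exact Nat.mod_modEq _ n
  apply Nat.dvd_of_mod_eq_zero
  rw [h1, show j + k + (2 * n - (j + k)) = 2 * n by omega, Nat.mul_mod_left]

lemma lfn_cases {n j k : ℕ} (hj : j < n) (hk : k < n) :
    j + k + lfn n j k = 0 ∨ j + k + lfn n j k = n ∨ j + k + lfn n j k = 2 * n := by
  obtain ⟨s, hs⟩ := lfn_dvd hj hk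
  have hl := lfn_lt (by omega : 0 < n) j k
  exact small_of_dvd3 (by omega) (by omega) hs

lemma lfn_inv {n j k : ℕ} (hj : j < n) (hk : k < n) : lfn n j (lfn n j k) = k := by
  have h1 := lfn_cases hj hk
  have h2 := lfn_cases hj (lfn_lt (by omega : 0 < n) j k)
  have h3 := lfn_lt (by omega : 0 < n) j k
  have h4 := lfn_lt (by omega : 0 < n) j (lfn n j k)
  omega
lemma pt_mem_triple {n j k : ℕ} (hn : n ≠ 0) (hj : j < n) (hk : k < n)
    (hkj : k ≠ j) (hlj : lfn n j k ≠ j) (hlk : lfn n j k ≠ k) :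
    (zet n ^ j + zet n ^ k + zet n ^ (lfn n j k)) ∈ TriplePts n ∩ Bline n j := by
  set l := lfn n j k with hl
  have hll : l < n := lfn_lt (by omega) j k
  have hd1 : n ∣ j + k + l := lfn_dvd hj hk
  have hd2 : n ∣ k + j + l := by rw [show k + j + l = j + k + l by omega]; exact hd1
  have hd3 : n ∣ l + j + k := by rw [show l + j + k = j + k + l by omega]; exact hd1
  have hm1 : (zet n ^ j + zet n ^ k + zet n ^ l) ∈ Bline n j := triple_mem hn hd1
  have hm2 : (zet n ^ j + zet n ^ k + zet n ^ l) ∈ Bline n k := by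
    rw [show zet n ^ j + zet n ^ k + zet n ^ l = zet n ^ k + zet n ^ j + zet n ^ l by ring]
    exact triple_mem hn hd2
  have hm3 : (zet n ^ j + zet n ^ k + zet n ^ l) ∈ Bline n l := by
    rw [show zet n ^ j + zet n ^ k + zet n ^ l = zet n ^ l + zet n ^ j + zet n ^ k by ring]
    exact triple_mem hn hd3
  refine ⟨?_, hm1⟩
  rw [TriplePts, Set.mem_setOf_eq]
  have hsub : ({j, k, l} : Set ℕ) ⊆ {i : ℕ | i < n ∧ (zet n ^ j + zet n ^ k + zet n ^ l) ∈ Bline n i} := by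
    intro i hi
    rcases hi with rfl | rfl | rfl
    · exact ⟨hj, hm1⟩
    · exact ⟨hk, hm2⟩
    · exact ⟨hll, hm3⟩
  have hfin : ({i : ℕ | i < n ∧ (zet n ^ j + zet n ^ k + zet n ^ l) ∈ Bline n i}).Finite :=
    Set.Finite.subset (Set.finite_Iio n) (fun i hi => hi.1)
  have h3 : ({j, k, l} : Set ℕ).ncard = 3 := by
    rw [Set.ncard_insert_of_notMem (by simp; omega) (Set.Finite.insert _ (Set.finite_singleton _)),
      Set.ncard_pair (by omega)]
  rw [← h3]
  exact Set.ncard_le_ncard hsub hfin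
lemma pt_inj {n j k1 k2 : ℕ} (hn : n ≠ 0) (hj : j < n) (hk1 : k1 < n) (hk2 : k2 < n)
    (ho1 : k1 < lfn n j k1) (ho2 : k2 < lfn n j k2)
    (h : zet n ^ j + zet n ^ k1 + zet n ^ (lfn n j k1)
        = zet n ^ j + zet n ^ k2 + zet n ^ (lfn n j k2)) : k1 = k2 := by
  set l1 := lfn n j k1 with hl1
  set l2 := lfn n j k2 with hl2
  have hll1 : l1 < n := lfn_lt (by omega) j k1
  have hll2 : l2 < n := lfn_lt (by omega) j k2
  have hz0 : zet n ≠ 0 := zet_ne_zero n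
  have hprim := zet_prim hn
  have h' : zet n ^ k1 + zet n ^ l1 = zet n ^ k2 + zet n ^ l2 := by linear_combination h
  rcases unit_sum_cases (pow_ne_zero _ hz0) (pow_ne_zero _ hz0) (pow_ne_zero _ hz0)
      (pow_ne_zero _ hz0) (conj_zet_pow hn k1) (conj_zet_pow hn l1)
      (conj_zet_pow hn k2) (conj_zet_pow hn l2) h' with h1 | h1 | h1
  · exact hprim.pow_inj hk1 hk2 h1.1
  · have e1 : k1 = l2 := hprim.pow_inj hk1 hll2 h1.1
    have e2 : l1 = k2 := hprim.pow_inj hll1 hk2 h1.2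
    omega
  · have u1 : zet n ^ j * zet n ^ k1 * zet n ^ l1 = 1 := pow_triple_one hn (lfn_dvd hj hk1)
    have u2 : zet n ^ j * zet n ^ k2 * zet n ^ l2 = 1 := pow_triple_one hn (lfn_dvd hj hk2)
    rw [h1.1] at u1
    rw [h1.2] at u2
    have h9 : (zet n ^ k1 - zet n ^ k2) * (zet n ^ k1 + zet n ^ k2) = 0 := by
      have hne : -(zet n ^ j) ≠ 0 := neg_ne_zero.mpr (pow_ne_zero _ hz0)
      apply mul_left_cancel₀ hne
      rw [mul_zero]
      linear_combination u1 - u2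
    rcases mul_eq_zero.mp h9 with h10 | h10
    · exact hprim.pow_inj hk1 hk2 (sub_eq_zero.mp h10)
    · have e1 : zet n ^ k1 = zet n ^ l2 := by
        rw [h1.2]; linear_combination h10
      have e2 : zet n ^ l1 = zet n ^ k2 := by
        rw [h1.1]; linear_combination -h10
      have e1' : k1 = l2 := hprim.pow_inj hk1 hll2 e1
      have e2' : l1 = k2 := hprim.pow_inj hll1 hk2 e2
      omega
lemma triple_inter_finite {n : ℕ} (hn : n ≠ 0) {j : ℕ} (hj : j < n) :
    (TriplePts n ∩ Bline n j).Finite := by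
  have hbig : (TriplePts n ∩ Bline n j) ⊆
      ⋃ i ∈ ((Finset.range n).erase j : Finset ℕ), (Bline n i ∩ Bline n j) := by
    intro z hz
    obtain ⟨hz1, hz2⟩ := hz
    rw [TriplePts, Set.mem_setOf_eq] at hz1
    have hex : ∃ i, (i < n ∧ z ∈ Bline n i) ∧ i ≠ j := by
      by_contra hno
      push_neg at hno
      have hsub : {i : ℕ | i < n ∧ z ∈ Bline n i} ⊆ {j} := by
        intro i hi
        simp only [Set.mem_singleton_iff]
        exact hno i hi
      have := Set.ncard_le_ncard hsub (Set.finite_singleton j)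
      rw [Set.ncard_singleton] at this
      omega
    obtain ⟨i, ⟨hi1, hi2⟩, hi3⟩ := hex
    apply Set.mem_biUnion (by simp [Finset.mem_erase, hi3, hi1] : i ∈ ((Finset.range n).erase j : Finset ℕ))
    exact ⟨hi2, hz2⟩
  apply Set.Finite.subset _ hbig
  apply Set.Finite.biUnion (Finset.finite_toSet _)
  intro i hi
  simp only [Finset.coe_sort_coe, Finset.mem_coe, Finset.mem_erase, Finset.mem_range] at hi
  exact (inter_subsingleton hn hi.2 hj hi.1).finite

/-- For even `n ≥ 14`, every line of the Böröczky configuration contains at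
least `⌊n/3⌋ + 1` triple points. -/
theorem boroczky_points_on_line' (n : ℕ) (hn : 14 ≤ n) (heven : Even n) :
    ∀ j, j < n →
      (TriplePts n ∩ Bline n j).Finite ∧ n / 3 + 1 ≤ (TriplePts n ∩ Bline n j).ncard := by
  intro j hj
  classical
  have hn0 : n ≠ 0 := by omega
  have hz0 : zet n ≠ 0 := zet_ne_zero n
  have hprim := zet_prim hn0
  refine ⟨triple_inter_finite hn0 hj, ?_⟩
  set G : Finset ℕ := (Finset.range n).filter
    (fun k => k ≠ j ∧ lfn n j k ≠ j ∧ lfn n j k ≠ k) with hG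
  set K : Finset ℕ := G.filter (fun k => k < lfn n j k) with hK
  set K' : Finset ℕ := G.filter (fun k => lfn n j k < k) with hK'
  set D : Finset ℕ := (Finset.range n).filter (fun k => lfn n j k = k) with hD
  have hDmem : ∀ k ∈ D, k < n ∧ lfn n j k = k := by
    intro k hk
    rw [hD, Finset.mem_filter, Finset.mem_range] at hk
    exact hk
  have hGmem : ∀ k ∈ G, k < n ∧ k ≠ j ∧ lfn n j k ≠ j ∧ lfn n j k ≠ k := by
    intro k hk
    rw [hG, Finset.mem_filter, Finset.mem_range] at hk
    exact ⟨hk.1, hk.2⟩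
  -- D has at most two elements
  have hDcard : D.card ≤ 2 := by
    rcases Finset.eq_empty_or_nonempty D with he | ⟨k0, hk0⟩
    · simp [he]
    · obtain ⟨hk0n, hk0l⟩ := hDmem k0 hk0
      have hmap : ∀ k ∈ D, zet n ^ k ∈ ({zet n ^ k0, -(zet n ^ k0)} : Finset ℂ) := by
        intro k hk
        obtain ⟨hkn, hkl⟩ := hDmem k hk
        have u1 : zet n ^ j * zet n ^ k * zet n ^ k = 1 := by
          have := pow_triple_one hn0 (lfn_dvd hj hkn)
          rwa [hkl] at this
        have u2 : zet n ^ j * zet n ^ k0 * zet n ^ k0 = 1 := by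
          have := pow_triple_one hn0 (lfn_dvd hj hk0n)
          rwa [hk0l] at this
        have h9 : (zet n ^ k - zet n ^ k0) * (zet n ^ k + zet n ^ k0) = 0 := by
          apply mul_left_cancel₀ (pow_ne_zero j hz0)
          rw [mul_zero]
          linear_combination u1 - u2
        rw [Finset.mem_insert, Finset.mem_singleton]
        rcases mul_eq_zero.mp h9 with h10 | h10
        · exact Or.inl (sub_eq_zero.mp h10)
        · exact Or.inr (by linear_combination h10)
      have hinj : Set.InjOn (fun k => zet n ^ k) ↑D := by
        intro a ha b hb hab
        exact hprim.pow_inj (hDmem a ha).1 (hDmem b hb).1 hab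
      calc D.card ≤ ({zet n ^ k0, -(zet n ^ k0)} : Finset ℂ).card :=
            Finset.card_le_card_of_injOn _ hmap hinj
        _ ≤ 2 := by
            apply le_trans (Finset.card_insert_le _ _)
            simp
  -- complement of G is small
  have hGcard : n ≤ G.card + 4 := by
    have hsub : Finset.range n ⊆ G ∪ ({j, lfn n j j} ∪ D) := by
      intro k hk
      have hkn : k < n := Finset.mem_range.mp hk
      by_cases hkG : k ∈ G
      · exact Finset.mem_union_left _ hkG
      · apply Finset.mem_union_right
        rw [hG, Finset.mem_filter] at hkG
        push_neg at hkG
        rcases (by tauto : k = j ∨ lfn n j k = j ∨ lfn n j k = k) with h1 | h1 | h1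
        · exact Finset.mem_union_left _ (by simp [h1])
        · apply Finset.mem_union_left
          have := lfn_inv hj hkn
          rw [h1] at this
          simp [← this]
        · exact Finset.mem_union_right _ (by rw [hD, Finset.mem_filter, Finset.mem_range]; exact ⟨hkn, h1⟩)
    have h1 := Finset.card_le_card hsub
    rw [Finset.card_range] at h1
    have h2 := Finset.card_union_le G ({j, lfn n j j} ∪ D)
    have h3 := Finset.card_union_le ({j, lfn n j j} : Finset ℕ) D
    have h4 : ({j, lfn n j j} : Finset ℕ).card ≤ 2 := by
      apply le_trans (Finset.card_insert_le _ _)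
      simp
    omega
  -- G is invariant under the involution
  have hGinv : ∀ k ∈ G, lfn n j k ∈ G := by
    intro k hk
    obtain ⟨hkn, hkj, hlj, hlk⟩ := hGmem k hk
    have hln : lfn n j k < n := lfn_lt (by omega) j k
    have hinv : lfn n j (lfn n j k) = k := lfn_inv hj hkn
    rw [hG, Finset.mem_filter, Finset.mem_range]
    refine ⟨hln, hlj, ?_, ?_⟩
    · rw [hinv]; exact hkj
    · rw [hinv]; exact fun he => hlk he.symm
  -- K and K' have equal cardinality
  have hKK' : K.card = K'.card := by
    apply Finset.card_bij (fun k _ => lfn n j k)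
    · intro k hk
      rw [hK, Finset.mem_filter] at hk
      obtain ⟨hkG, hklt⟩ := hk
      have hkn := (hGmem k hkG).1
      rw [hK', Finset.mem_filter]
      exact ⟨hGinv k hkG, by rw [lfn_inv hj hkn]; exact hklt⟩
    · intro k1 h1 k2 h2 he
      rw [hK, Finset.mem_filter] at h1 h2
      have e1 := lfn_inv hj (hGmem k1 h1.1).1
      have e2 := lfn_inv hj (hGmem k2 h2.1).1
      rw [← e1, ← e2, he]
    · intro b hb
      rw [hK', Finset.mem_filter] at hb
      obtain ⟨hbG, hblt⟩ := hb
      have hbn := (hGmem b hbG).1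
      refine ⟨lfn n j b, ?_, lfn_inv hj hbn⟩
      rw [hK, Finset.mem_filter]
      exact ⟨hGinv b hbG, by rw [lfn_inv hj hbn]; exact hblt⟩
  have hsplit : K.card + K'.card = G.card := by
    have he : K' = G.filter (fun k => ¬ k < lfn n j k) := by
      apply Finset.filter_congr
      intro k hk
      have := (hGmem k hk).2.2.2
      omega
    rw [he]
    exact Finset.card_filter_add_card_filter_not _
  -- the image of K consists of triple points on the line
  set F : Finset ℂ := K.image (fun k => zet n ^ j + zet n ^ k + zet n ^ (lfn n j k)) with hF
  have hKmem : ∀ k ∈ K, k < n ∧ k ≠ j ∧ lfn n j k ≠ j ∧ lfn n j k ≠ k ∧ k < lfn n j k := by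
    intro k hk
    rw [hK, Finset.mem_filter] at hk
    obtain ⟨h1, h2, h3, h4⟩ := hGmem k hk.1
    exact ⟨h1, h2, h3, h4, hk.2⟩
  have hFcard : F.card = K.card := by
    apply Finset.card_image_of_injOn
    intro k1 h1 k2 h2 he
    exact pt_inj hn0 hj (hKmem k1 h1).1 (hKmem k2 h2).1 (hKmem k1 h1).2.2.2.2
      (hKmem k2 h2).2.2.2.2 he
  have hFsub : ↑F ⊆ TriplePts n ∩ Bline n j := by
    intro x hx
    rw [hF, Finset.coe_image] at hx
    obtain ⟨k, hk, rfl⟩ := hx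
    obtain ⟨h1, h2, h3, h4, h5⟩ := hKmem k hk
    exact pt_mem_triple hn0 hj h1 h2 h3 h4
  have hle : F.card ≤ (TriplePts n ∩ Bline n j).ncard := by
    rw [← Set.ncard_coe_finset]
    exact Set.ncard_le_ncard hFsub (triple_inter_finite hn0 hj)
  obtain ⟨m, rfl⟩ := heven
  omega
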